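/- Let H be the subgroup of GL(5, ℤ) consisting of all matrices A with determinant 1, A₀₀ = 1, A₄₄ = 1, A_{i0} = 0 for every i ≠ 0, and A_{4j} = 0 for every j ≠ 4 (indices in {0,1,2,3,4}), and let u ∈ GL(5, ℤ) be the diagonal matrix diag(−1, 1, 1, 1, 1). Then for every g ∈ H, the centralizer {h ∈ H : h(gu) = (gu)h} has infinite index in H; in particular, the conjugacy class of gu in the subgroup generated by H and u is infinite. -/

import Mathlib

set_option maxHeartbeats 1000000


/-- Let `H` be the subgroup of `GL(5, ℤ)` of determinant-one matrices `A` with `A 0 0 = 1`,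
`A 4 4 = 1`, the rest of column `0` vanishing and the rest of row `4` vanishing, and let
`u = diag(−1, 1, 1, 1, 1)`.  Then for every `g ∈ H`, the centralizer
`{h ∈ H : h (g u) = (g u) h}` has infinite index in `H`; in particular, the conjugacy class
of `g u` in the subgroup generated by `H` and `u` is infinite. -/
theorem infinite_index_centralizer_of_twisted_element_GL5
    (H : Subgroup (GL (Fin 5) ℤ))
    (hH : ∀ A : GL (Fin 5) ℤ, A ∈ H ↔
      ((A : Matrix (Fin 5) (Fin 5) ℤ).det = 1 ∧
        (A : Matrix (Fin 5) (Fin 5) ℤ) 0 0 = 1 ∧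
        (A : Matrix (Fin 5) (Fin 5) ℤ) 4 4 = 1 ∧
        (∀ i : Fin 5, i ≠ 0 → (A : Matrix (Fin 5) (Fin 5) ℤ) i 0 = 0) ∧
        (∀ j : Fin 5, j ≠ 4 → (A : Matrix (Fin 5) (Fin 5) ℤ) 4 j = 0)))
    (u : GL (Fin 5) ℤ)
    (hu : ∀ i j : Fin 5, (u : Matrix (Fin 5) (Fin 5) ℤ) i j =
      if i = j then (if i = 0 then -1 else 1) else 0)
    (g : GL (Fin 5) ℤ) (hg : g ∈ H) :
    (Subgroup.comap H.subtype (Subgroup.centralizer {g * u})).index = 0 := by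
  classical
  set Em : ℤ → Matrix (Fin 5) (Fin 5) ℤ :=
    fun n => 1 + n • Matrix.single 0 4 1 with hEm
  have hmul : ∀ a b : ℤ, Em a * Em b = Em (a + b) := by
    intro a b
    have h0 : Matrix.single (0:Fin 5) (4:Fin 5) (1:ℤ) *
        Matrix.single 0 4 1 = 0 :=
      Matrix.single_mul_single_of_ne (1:ℤ) (0:Fin 5) (4:Fin 5)
        (0:Fin 5) (show (4:Fin 5) ≠ 0 by decide) 1
    have h0' : (a • Matrix.single (0:Fin 5) (4:Fin 5) (1:ℤ)) *
        (b • Matrix.single (0:Fin 5) (4:Fin 5) (1:ℤ)) = 0 := by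
      rw [smul_mul_assoc, mul_smul_comm, h0, smul_zero, smul_zero]
    simp only [hEm, add_mul, mul_add, one_mul, mul_one, h0', add_zero, add_smul]
    abel
  have hEapply : ∀ (n : ℤ) (i j : Fin 5),
      Em n i j = (if i = j then 1 else 0) + (if i = 0 ∧ j = 4 then n else 0) := by
    intro n i j
    fin_cases i <;> fin_cases j <;>
      simp [hEm, Matrix.single, Matrix.one_apply]
  have hone : Em 0 = 1 := by simp [hEm]
  let e : ℤ → GL (Fin 5) ℤ := fun n =>
    ⟨Em n, Em (-n), by rw [hmul]; simp [hone], by rw [hmul]; simp [hone]⟩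
  have heH : ∀ n, e n ∈ H := by
    intro n
    have hval : ((e n : GL (Fin 5) ℤ) : Matrix (Fin 5) (Fin 5) ℤ) = Em n := rfl
    rw [hH, hval]
    refine ⟨?_, ?_, ?_, ?_, ?_⟩
    · rw [Matrix.det_of_upperTriangular]
      · simp [hEapply, Fin.prod_univ_five]
      · intro i j hij
        rw [hEapply]
        fin_cases i <;> fin_cases j <;> simp_all
    · simp [hEapply]
    · simp [hEapply]
    · intro i hi; rw [hEapply]; simp [hi]
    · intro j hj; rw [hEapply]; simp [Ne.symm hj]
  have hM44 : ((g * u : GL (Fin 5) ℤ) : Matrix (Fin 5) (Fin 5) ℤ) 4 4 = 1 := by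
    obtain ⟨-, -, hg44, -, -⟩ := (hH g).mp hg
    rw [Units.val_mul, Matrix.mul_apply, Fin.sum_univ_five]
    simp [hu, hg44]
  have hM00 : ((g * u : GL (Fin 5) ℤ) : Matrix (Fin 5) (Fin 5) ℤ) 0 0 = -1 := by
    obtain ⟨-, hg00, -, -, -⟩ := (hH g).mp hg
    rw [Units.val_mul, Matrix.mul_apply, Fin.sum_univ_five]
    simp [hu, hg00]
  -- key: if e k commutes with g*u then k = 0
  have hkey : ∀ k : ℤ, (e k) * (g * u) = (g * u) * (e k) → k = 0 := by
    intro k hcomm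
    have hmat : Em k * ((g * u : GL (Fin 5) ℤ) : Matrix (Fin 5) (Fin 5) ℤ) =
        ((g * u : GL (Fin 5) ℤ) : Matrix (Fin 5) (Fin 5) ℤ) * Em k :=
      congrArg Units.val hcomm
    have h04 := congrFun (congrFun hmat 0) 4
    set M := ((g * u : GL (Fin 5) ℤ) : Matrix (Fin 5) (Fin 5) ℤ)
    have hL : (Em k * M) 0 4 = M 0 4 + k * M 4 4 := by
      simp [hEm, Matrix.add_mul, Matrix.smul_mul]
    have hR : (M * Em k) 0 4 = M 0 4 + M 0 0 * k := by
      simp [hEm, Matrix.mul_add, Matrix.mul_smul]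
    rw [hL, hR, hM44, hM00] at h04
    omega
  set K := Subgroup.comap H.subtype (Subgroup.centralizer {g * u}) with hK
  have hinj : Function.Injective
      (fun n : ℤ => (QuotientGroup.mk (⟨e n, heH n⟩ : H) : H ⧸ K)) := by
    intro n m hnm
    have hmem : (⟨e n, heH n⟩ : H)⁻¹ * ⟨e m, heH m⟩ ∈ K := (QuotientGroup.eq).mp hnm
    rw [hK, Subgroup.mem_comap] at hmem
    have : (e n)⁻¹ * e m ∈ Subgroup.centralizer {g * u} := hmem
    rw [Subgroup.mem_centralizer_singleton_iff] at this
    have hval : (e n)⁻¹ * e m = e (-n + m) := by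
      apply Units.ext
      show Em (-n) * Em m = Em (-n + m)
      exact hmul _ _
    rw [hval] at this
    have := hkey _ this
    omega
  have : Infinite (H ⧸ K) := Infinite.of_injective _ hinj
  rw [Subgroup.index]
  exact Nat.card_eq_zero_of_infinite
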